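/- Let S : X → E be an admissible impact map and A ⊂ E an admissible acceptance set. Assume S is positively homogeneous, A is a cone, S(e) is a strictly positive real constant (where e = (1,…,1) ∈ ℝ^d is identified with a constant random vector), and the set bar(A) ∩ {W ∈ L^1 : ‖W‖_{L^1} ≤ 1} is σ(E',E)-compact. Then σ_{S^{-1}(A)} = α. -/

import Mathlib

open MeasureTheory Filter Set
open scoped ENNReal

noncomputable section

namespace SystemicRisk

variable {Ω : Type*} [MeasurableSpace Ω]

/-- A random variable is essentially bounded. -/
def EssBdd {μ : Measure Ω} (f : Ω →ₘ[μ] ℝ) : Prop :=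
  ∃ C : ℝ, ∀ᵐ ω ∂μ, |f ω| ≤ C

/-- The scalar pairing `E[U W]`. -/
def ip {μ : Measure Ω} (U W : Ω →ₘ[μ] ℝ) : ℝ := ∫ ω, U ω * W ω ∂μ

/-- The Köthe dual of a set of random variables. -/
def kdual {μ : Measure Ω} (L : Set (Ω →ₘ[μ] ℝ)) : Set (Ω →ₘ[μ] ℝ) :=
  {Z | ∀ f ∈ L, Integrable (fun ω => f ω * Z ω) μ}

/-- `nrm` is a Banach lattice norm on `L` (w.r.t. the a.s. order). -/
structure IsBLNorm {μ : Measure Ω} (L : Set (Ω →ₘ[μ] ℝ)) (nrm : (Ω →ₘ[μ] ℝ) → ℝ) : Prop where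
  nonneg : ∀ f ∈ L, 0 ≤ nrm f
  eq_zero_iff : ∀ f ∈ L, (nrm f = 0 ↔ f = 0)
  smul_eq : ∀ f ∈ L, ∀ c : ℝ, nrm (c • f) = |c| * nrm f
  triangle : ∀ f ∈ L, ∀ g ∈ L, nrm (f + g) ≤ nrm f + nrm g
  solid : ∀ f ∈ L, ∀ g ∈ L, |f| ≤ |g| → nrm f ≤ nrm g
  complete : ∀ u : ℕ → (Ω →ₘ[μ] ℝ), (∀ n, u n ∈ L) →
      (∀ ε : ℝ, 0 < ε → ∃ N : ℕ, ∀ m ≥ N, ∀ n ≥ N, nrm (u m - u n) < ε) →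
      ∃ f ∈ L, ∀ ε : ℝ, 0 < ε → ∃ N : ℕ, ∀ n ≥ N, nrm (u n - f) < ε

/-- `L` is an admissible space: a linear subspace of `L^0` which is a Banach lattice
(for the a.s. order, with norm `nrm`) satisfying `L^∞ ⊆ L ⊆ L^1`. -/
structure IsAdmissible {μ : Measure Ω} (L : Set (Ω →ₘ[μ] ℝ)) (nrm : (Ω →ₘ[μ] ℝ) → ℝ) : Prop where
  zero_mem : (0 : Ω →ₘ[μ] ℝ) ∈ L
  add_mem : ∀ f ∈ L, ∀ g ∈ L, f + g ∈ L
  smul_mem : ∀ (c : ℝ), ∀ f ∈ L, c • f ∈ L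
  sup_mem : ∀ f ∈ L, ∀ g ∈ L, f ⊔ g ∈ L
  inf_mem : ∀ f ∈ L, ∀ g ∈ L, f ⊓ g ∈ L
  linfty_subset : ∀ f, EssBdd f → f ∈ L
  subset_lone : ∀ f ∈ L, Integrable f μ
  banach : IsBLNorm L nrm

variable {d : ℕ}

/-- The product space `X = X_1 × ⋯ × X_d`. -/
def prodSet {μ : Measure Ω} (Li : Fin d → Set (Ω →ₘ[μ] ℝ)) : Set (Fin d → (Ω →ₘ[μ] ℝ)) :=
  {X | ∀ i, X i ∈ Li i}

/-- The vector pairing `E[⟨X,Z⟩] = ∑ i, E[X_i Z_i]`. -/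
def pairing {μ : Measure Ω} (X Z : Fin d → (Ω →ₘ[μ] ℝ)) : ℝ := ∑ i, ip (X i) (Z i)

/-- The constant random vector associated with `m ∈ ℝ^d`. -/
def cvec (μ : Measure Ω) (m : Fin d → ℝ) : Fin d → (Ω →ₘ[μ] ℝ) :=
  fun i => (AEEqFun.const Ω (m i) : Ω →ₘ[μ] ℝ)

/-- The weak topology `σ(P, D)` on a set of random vectors `P` induced by the pairing
with elements of `D`. -/
def wtop {μ : Measure Ω} (P D : Set (Fin d → (Ω →ₘ[μ] ℝ))) : TopologicalSpace ↥P :=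
  TopologicalSpace.induced
    (fun X : ↥P => fun Z : ↥D => pairing (X : Fin d → (Ω →ₘ[μ] ℝ)) (Z : Fin d → (Ω →ₘ[μ] ℝ)))
    Pi.topologicalSpace

/-- The weak topology `σ(P, D)` on a set of random variables `P` induced by the pairing
with elements of `D`. -/
def wtop1 {μ : Measure Ω} (P D : Set (Ω →ₘ[μ] ℝ)) : TopologicalSpace ↥P :=
  TopologicalSpace.induced
    (fun U : ↥P => fun W : ↥D => ip (U : Ω →ₘ[μ] ℝ) (W : Ω →ₘ[μ] ℝ))
    Pi.topologicalSpace

/-- An admissible impact map `S : X → E`. -/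
structure IsAdmissibleImpact {μ : Measure Ω} (XX XX' : Set (Fin d → (Ω →ₘ[μ] ℝ)))
    (EE EE' : Set (Ω →ₘ[μ] ℝ)) (S : (Fin d → (Ω →ₘ[μ] ℝ)) → (Ω →ₘ[μ] ℝ)) : Prop where
  mapsTo : ∀ X ∈ XX, S X ∈ EE
  nonconst : ∃ X ∈ XX, ∃ Y ∈ XX, S X ≠ S Y
  normalized : S 0 = 0
  mono : ∀ X ∈ XX, ∀ Y ∈ XX, X ≤ Y → S X ≤ S Y
  concave : ∀ X ∈ XX, ∀ Y ∈ XX, ∀ t : ℝ, 0 ≤ t → t ≤ 1 →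
      t • S X + (1 - t) • S Y ≤ S (t • X + (1 - t) • Y)
  usc : ∀ W ∈ EE', (0 : Ω →ₘ[μ] ℝ) ≤ W →
      @UpperSemicontinuous (↥XX) ℝ (wtop XX XX') _
        (fun X : ↥XX => ∫ ω, S (X : Fin d → (Ω →ₘ[μ] ℝ)) ω * W ω ∂μ)

/-- An admissible acceptance set `A ⊆ E` (relative to the impact map `S`). -/
structure IsAdmissibleAcceptance {μ : Measure Ω} (XX : Set (Fin d → (Ω →ₘ[μ] ℝ)))
    (EE EE' : Set (Ω →ₘ[μ] ℝ)) (S : (Fin d → (Ω →ₘ[μ] ℝ)) → (Ω →ₘ[μ] ℝ))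
    (A : Set (Ω →ₘ[μ] ℝ)) : Prop where
  subset : A ⊆ EE
  preimage_nonempty : ∃ X ∈ XX, S X ∈ A
  preimage_proper : ∃ X ∈ XX, S X ∉ A
  zero_mem : (0 : Ω →ₘ[μ] ℝ) ∈ A
  mono : ∀ U ∈ A, ∀ V ∈ EE, (0 : Ω →ₘ[μ] ℝ) ≤ V → U + V ∈ A
  convex : ∀ U ∈ A, ∀ V ∈ A, ∀ t : ℝ, 0 ≤ t → t ≤ 1 → t • U + (1 - t) • V ∈ A
  closed : @IsClosed (↥EE) (wtop1 EE EE') {U : ↥EE | (U : Ω →ₘ[μ] ℝ) ∈ A}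

/-- The systemic acceptance set `S⁻¹(A) = {X ∈ X : S(X) ∈ A}`. -/
def sysAcc {μ : Measure Ω} (XX : Set (Fin d → (Ω →ₘ[μ] ℝ)))
    (S : (Fin d → (Ω →ₘ[μ] ℝ)) → (Ω →ₘ[μ] ℝ)) (A : Set (Ω →ₘ[μ] ℝ)) :
    Set (Fin d → (Ω →ₘ[μ] ℝ)) :=
  {X ∈ XX | S X ∈ A}

/-- The "first allocate, then aggregate" systemic risk measure `ρ`. -/
def rho (μ : Measure Ω) (S : (Fin d → (Ω →ₘ[μ] ℝ)) → (Ω →ₘ[μ] ℝ)) (A : Set (Ω →ₘ[μ] ℝ))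
    (X : Fin d → (Ω →ₘ[μ] ℝ)) : EReal :=
  ⨅ m ∈ {m : Fin d → ℝ | S (X + cvec μ m) ∈ A}, ((∑ i, m i : ℝ) : EReal)

/-- The (lower) support function of a set of random vectors. -/
def suppV {μ : Measure Ω} (B : Set (Fin d → (Ω →ₘ[μ] ℝ))) (Z : Fin d → (Ω →ₘ[μ] ℝ)) : EReal :=
  ⨅ X ∈ B, ((pairing X Z : ℝ) : EReal)

/-- The barrier cone of a set of random vectors, inside the dual set `D`. -/
def barrV {μ : Measure Ω} (B D : Set (Fin d → (Ω →ₘ[μ] ℝ))) : Set (Fin d → (Ω →ₘ[μ] ℝ)) :=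
  {Z ∈ D | ⊥ < suppV B Z}

/-- The (lower) support function of a set of random variables. -/
def suppS {μ : Measure Ω} (A : Set (Ω →ₘ[μ] ℝ)) (W : Ω →ₘ[μ] ℝ) : EReal :=
  ⨅ U ∈ A, ((ip U W : ℝ) : EReal)

/-- The barrier cone of a set of random variables, inside the dual set `D`. -/
def barrS {μ : Measure Ω} (A D : Set (Ω →ₘ[μ] ℝ)) : Set (Ω →ₘ[μ] ℝ) :=
  {W ∈ D | ⊥ < suppS A W}

/-- The generic penalty function with dual variables `W` ranging over `K`. -/
def penalty {μ : Measure Ω} (XX : Set (Fin d → (Ω →ₘ[μ] ℝ)))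
    (A : Set (Ω →ₘ[μ] ℝ)) (S : (Fin d → (Ω →ₘ[μ] ℝ)) → (Ω →ₘ[μ] ℝ))
    (K : Set (Ω →ₘ[μ] ℝ)) (Z : Fin d → (Ω →ₘ[μ] ℝ)) : EReal :=
  ⨆ W ∈ K, (suppS A W +
    ⨅ X ∈ XX, ((pairing X Z - ∫ ω, S X ω * W ω ∂μ : ℝ) : EReal))

/-- a.s. strictly positive random variables. -/
def strictPos (μ : Measure Ω) : Set (Ω →ₘ[μ] ℝ) := {W | ∀ᵐ ω ∂μ, 0 < W ω}

/-- The penalty function `α`. -/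
def alpha {μ : Measure Ω} (XX : Set (Fin d → (Ω →ₘ[μ] ℝ))) (EE' : Set (Ω →ₘ[μ] ℝ))
    (A : Set (Ω →ₘ[μ] ℝ)) (S : (Fin d → (Ω →ₘ[μ] ℝ)) → (Ω →ₘ[μ] ℝ)) :
    (Fin d → (Ω →ₘ[μ] ℝ)) → EReal :=
  penalty XX A S (barrS A EE')

/-- The penalty function `α⁺`. -/
def alphaPlus {μ : Measure Ω} (XX : Set (Fin d → (Ω →ₘ[μ] ℝ))) (EE' : Set (Ω →ₘ[μ] ℝ))
    (A : Set (Ω →ₘ[μ] ℝ)) (S : (Fin d → (Ω →ₘ[μ] ℝ)) → (Ω →ₘ[μ] ℝ)) :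
    (Fin d → (Ω →ₘ[μ] ℝ)) → EReal :=
  penalty XX A S (barrS A EE' ∩ (strictPos μ ∪ {0}))

/-- a.s. strictly positive random vectors. -/
def strictPosV (μ : Measure Ω) (d : ℕ) : Set (Fin d → (Ω →ₘ[μ] ℝ)) :=
  {Z | ∀ i, ∀ᵐ ω ∂μ, 0 < Z i ω}

/-- The set `C` of nonnegative dual vectors with all components of expectation one. -/
def Cset {μ : Measure Ω} (XX' : Set (Fin d → (Ω →ₘ[μ] ℝ))) : Set (Fin d → (Ω →ₘ[μ] ℝ)) :=
  {Z ∈ XX' | (∀ i, (0 : Ω →ₘ[μ] ℝ) ≤ Z i) ∧ ∀ i, (∫ ω, Z i ω ∂μ) = 1}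

/-- A map with values in `[−∞,∞]` is proper on `P` if it never attains `−∞` on `P`
and is finite somewhere on `P`. -/
def ProperOn {β : Type*} (P : Set β) (f : β → EReal) : Prop :=
  (∀ x ∈ P, f x ≠ ⊥) ∧ ∃ x ∈ P, f x ≠ ⊤

/-- The positive part of an extended real number, as an extended nonnegative real. -/
def epos (x : EReal) : ℝ≥0∞ := if x = ⊤ then ⊤ else ENNReal.ofReal x.toReal

/-- The integral of an extended-real-valued function. -/
def eintegral (μ : Measure Ω) (g : Ω → EReal) : EReal :=
  ((∫⁻ ω, epos (g ω) ∂μ : ℝ≥0∞) : EReal) - ((∫⁻ ω, epos (-(g ω)) ∂μ : ℝ≥0∞) : EReal)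


section Aux
open scoped Topology
variable {μ : Measure Ω}

lemma ip_zero_left (W : Ω →ₘ[μ] ℝ) : ip (0 : Ω →ₘ[μ] ℝ) W = 0 := by
  unfold ip
  rw [show (∫ ω, (0 : Ω →ₘ[μ] ℝ) ω * W ω ∂μ) = ∫ ω, (0:ℝ) ∂μ from
    integral_congr_ae (by filter_upwards [AEEqFun.coeFn_zero (β := ℝ) (μ := μ)] with ω h; simp [h])]
  simp

lemma ip_comm (U W : Ω →ₘ[μ] ℝ) : ip U W = ip W U := by
  unfold ip; exact integral_congr_ae (Eventually.of_forall fun ω => mul_comm _ _)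

lemma ip_zero_right (U : Ω →ₘ[μ] ℝ) : ip U 0 = 0 := by rw [ip_comm, ip_zero_left]

lemma ip_add_left {U V W : Ω →ₘ[μ] ℝ} (hU : Integrable (fun ω => U ω * W ω) μ)
    (hV : Integrable (fun ω => V ω * W ω) μ) : ip (U + V) W = ip U W + ip V W := by
  unfold ip
  rw [← integral_add hU hV]
  exact integral_congr_ae (by filter_upwards [AEEqFun.coeFn_add U V] with ω h; rw [h, Pi.add_apply]; ring)

lemma ip_smul_left (c : ℝ) (U W : Ω →ₘ[μ] ℝ) : ip (c • U) W = c * ip U W := by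
  unfold ip
  rw [← integral_const_mul]
  exact integral_congr_ae (by filter_upwards [AEEqFun.coeFn_smul c U] with ω h; rw [h]; simp; ring)

lemma ip_mono_left {U V W : Ω →ₘ[μ] ℝ} (hUV : U ≤ V) (hW : (0 : Ω →ₘ[μ] ℝ) ≤ W)
    (hU : Integrable (fun ω => U ω * W ω) μ) (hV : Integrable (fun ω => V ω * W ω) μ) :
    ip U W ≤ ip V W := by
  refine integral_mono_ae hU hV ?_
  rw [← AEEqFun.coeFn_le] at hUV hW
  filter_upwards [hUV, hW, AEEqFun.coeFn_zero (β := ℝ) (μ := μ)] with ω h1 h2 h3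
  have : (0:ℝ) ≤ W ω := by rw [h3] at h2; exact h2
  exact mul_le_mul_of_nonneg_right h1 this

lemma integrable_sum_mul {ι : Type*} (t : Finset ι) (U : ι → (Ω →ₘ[μ] ℝ)) (W : Ω →ₘ[μ] ℝ)
    (h : ∀ j ∈ t, Integrable (fun ω => U j ω * W ω) μ) :
    Integrable (fun ω => (∑ j ∈ t, U j) ω * W ω) μ := by
  classical
  induction t using Finset.induction_on with
  | empty =>
      simp only [Finset.sum_empty]
      exact (integrable_zero _ _ _).congr
        (by filter_upwards [AEEqFun.coeFn_zero (β := ℝ) (μ := μ)] with ω h0; simp [h0])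
  | @insert b s2 hnm ih2 =>
      rw [Finset.sum_insert hnm]
      have hb := h b (Finset.mem_insert_self b s2)
      have hs2 := ih2 fun j hj => h j (Finset.mem_insert_of_mem hj)
      exact (hb.add hs2).congr
        (by filter_upwards [AEEqFun.coeFn_add (U b) (∑ j ∈ s2, U j)] with ω hh
            rw [Pi.add_apply] at hh ⊢
            rw [hh]; ring)

lemma ip_sum_left {ι : Type*} (t : Finset ι) (U : ι → (Ω →ₘ[μ] ℝ)) (W : Ω →ₘ[μ] ℝ)
    (h : ∀ j ∈ t, Integrable (fun ω => U j ω * W ω) μ) :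
    ip (∑ j ∈ t, U j) W = ∑ j ∈ t, ip (U j) W := by
  classical
  induction t using Finset.induction_on with
  | empty => simp [ip_zero_left]
  | @insert a s hnotmem ih =>
      rw [Finset.sum_insert hnotmem, Finset.sum_insert hnotmem,
        ip_add_left (h a (Finset.mem_insert_self a s))
          (integrable_sum_mul s U W fun j hj => h j (Finset.mem_insert_of_mem hj)),
        ih fun j hj => h j (Finset.mem_insert_of_mem hj)]


lemma ereal_eq_bot {x : EReal} (h : ∀ r : ℝ, x ≤ (r : EReal)) : x = ⊥ := by
  induction x using EReal.rec with
  | bot => rfl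
  | coe r =>
      have := EReal.coe_le_coe_iff.1 (h (r - 1))
      linarith
  | top =>
      have := h 0
      simp at this

lemma aefun_zero_le {f : Ω →ₘ[μ] ℝ} : (0 : Ω →ₘ[μ] ℝ) ≤ f ↔ ∀ᵐ ω ∂μ, 0 ≤ f ω := by
  rw [← AEEqFun.coeFn_le]
  constructor
  · intro h; filter_upwards [h, AEEqFun.coeFn_zero (β := ℝ) (μ := μ)] with ω h1 h2
    rw [h2] at h1; exact h1
  · intro h; filter_upwards [h, AEEqFun.coeFn_zero (β := ℝ) (μ := μ)] with ω h1 h2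
    rw [h2]; exact h1

lemma aefun_smul_le_smul {c : ℝ} (hc : 0 ≤ c) {f g : Ω →ₘ[μ] ℝ} (h : f ≤ g) : c • f ≤ c • g := by
  rw [← AEEqFun.coeFn_le] at h ⊢
  filter_upwards [h, AEEqFun.coeFn_smul c f, AEEqFun.coeFn_smul c g] with ω h1 h2 h3
  rw [h2, h3]
  simp only [Pi.smul_apply, smul_eq_mul]
  exact mul_le_mul_of_nonneg_left h1 hc

lemma aefun_add_le_add {f g h k : Ω →ₘ[μ] ℝ} (h1 : f ≤ g) (h2 : h ≤ k) : f + h ≤ g + k := by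
  rw [← AEEqFun.coeFn_le] at h1 h2 ⊢
  filter_upwards [h1, h2, AEEqFun.coeFn_add f h, AEEqFun.coeFn_add g k] with ω a1 a2 a3 a4
  rw [a3, a4, Pi.add_apply, Pi.add_apply]
  exact add_le_add a1 a2

lemma const_mem_of_admissible {L : Set (Ω →ₘ[μ] ℝ)} {nrm} (hE : IsAdmissible L nrm) (c : ℝ) :
    (AEEqFun.const Ω c : Ω →ₘ[μ] ℝ) ∈ L := by
  refine hE.linfty_subset _ ⟨|c|, ?_⟩
  filter_upwards [AEEqFun.coeFn_const (μ := μ) Ω c] with ω h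
  rw [h, Function.const_apply]

lemma kdual_zero_mem (L : Set (Ω →ₘ[μ] ℝ)) : (0 : Ω →ₘ[μ] ℝ) ∈ kdual L := by
  intro f _
  exact (integrable_zero _ _ _).congr
    (by filter_upwards [AEEqFun.coeFn_zero (β := ℝ) (μ := μ)] with ω h; simp [h])

lemma kdual_smul_mem {L : Set (Ω →ₘ[μ] ℝ)} (c : ℝ) {W : Ω →ₘ[μ] ℝ} (hW : W ∈ kdual L) :
    c • W ∈ kdual L := by
  intro f hf
  exact ((hW f hf).const_mul c).congr
    (by filter_upwards [AEEqFun.coeFn_smul c W] with ω h; rw [h]; simp; ring)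

lemma kdual_add_mem {L : Set (Ω →ₘ[μ] ℝ)} {W V : Ω →ₘ[μ] ℝ} (hW : W ∈ kdual L)
    (hV : V ∈ kdual L) : W + V ∈ kdual L := by
  intro f hf
  exact ((hW f hf).add (hV f hf)).congr
    (by filter_upwards [AEEqFun.coeFn_add W V] with ω h
        simp only [Pi.add_apply] at h ⊢
        rw [h]; ring)

section SuppS
variable {A D : Set (Ω →ₘ[μ] ℝ)} {W : Ω →ₘ[μ] ℝ}

lemma suppS_le {U : Ω →ₘ[μ] ℝ} (hU : U ∈ A) (W : Ω →ₘ[μ] ℝ) :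
    suppS A W ≤ (ip U W : EReal) := iInf₂_le U hU

lemma barr_ip_nonneg (hcone : ∀ c : ℝ, 0 < c → ∀ U ∈ A, c • U ∈ A) (hW : W ∈ barrS A D) :
    ∀ U ∈ A, 0 ≤ ip U W := by
  intro U hU
  by_contra hneg
  push_neg at hneg
  have hbot : suppS A W = ⊥ := by
    apply ereal_eq_bot
    intro r
    obtain ⟨n, hn⟩ := exists_nat_ge (max 1 (r / ip U W))
    have hnpos : (0:ℝ) < n := lt_of_lt_of_le one_pos (le_trans (le_max_left _ _) hn)
    have h1 : ((n:ℝ)) * ip U W ≤ r := by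
      have h2 : r / ip U W ≤ n := le_trans (le_max_right _ _) hn
      calc (n:ℝ) * ip U W ≤ (r / ip U W) * ip U W :=
            mul_le_mul_of_nonpos_right h2 (le_of_lt hneg)
        _ = r := div_mul_cancel₀ r (ne_of_lt hneg)
    refine le_trans (suppS_le (hcone n hnpos U hU) W) ?_
    rw [ip_smul_left]
    exact_mod_cast h1
  have := hW.2
  rw [hbot] at this
  exact lt_irrefl _ this

lemma suppS_barr_eq_zero (h0 : (0 : Ω →ₘ[μ] ℝ) ∈ A)
    (hcone : ∀ c : ℝ, 0 < c → ∀ U ∈ A, c • U ∈ A) (hW : W ∈ barrS A D) : suppS A W = 0 := by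
  refine le_antisymm ?_ ?_
  · have := suppS_le h0 W
    rwa [ip_zero_left, EReal.coe_zero] at this
  · refine le_iInf₂ fun U hU => ?_
    have := barr_ip_nonneg hcone hW U hU
    exact_mod_cast this

lemma mem_barr_of_nonneg (hWD : W ∈ D) (h : ∀ U ∈ A, 0 ≤ ip U W) : W ∈ barrS A D := by
  refine ⟨hWD, lt_of_lt_of_le (EReal.bot_lt_coe 0) (le_iInf₂ fun U hU => ?_)⟩
  exact_mod_cast h U hU

lemma zero_mem_barr (hD : (0 : Ω →ₘ[μ] ℝ) ∈ D) : (0 : Ω →ₘ[μ] ℝ) ∈ barrS A D :=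
  mem_barr_of_nonneg hD fun U _ => le_of_eq (ip_zero_right U).symm

end SuppS

lemma barr_nonneg [IsProbabilityMeasure μ] {EE A : Set (Ω →ₘ[μ] ℝ)} {nrmE}
    (hE : IsAdmissible EE nrmE)
    (h0 : (0 : Ω →ₘ[μ] ℝ) ∈ A)
    (hmono : ∀ U ∈ A, ∀ V ∈ EE, (0 : Ω →ₘ[μ] ℝ) ≤ V → U + V ∈ A)
    (hcone : ∀ c : ℝ, 0 < c → ∀ U ∈ A, c • U ∈ A)
    {W : Ω →ₘ[μ] ℝ} (hW : W ∈ barrS A (kdual EE)) : (0 : Ω →ₘ[μ] ℝ) ≤ W := by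
  have hWint : Integrable (⇑W) μ := by
    have h1 := hW.1 (AEEqFun.const Ω (1:ℝ)) (const_mem_of_admissible hE 1)
    exact h1.congr (by
      filter_upwards [AEEqFun.coeFn_const (μ := μ) Ω (1:ℝ)] with ω h
      rw [h, Function.const_apply, one_mul])
  set N := {ω | W ω < 0} with hNdef
  have hN : MeasurableSet N := measurableSet_lt W.stronglyMeasurable.measurable measurable_const
  have hNzero : μ N = 0 := by
    by_contra hNne
    set Vfun : Ω → ℝ := N.indicator (fun _ => (1:ℝ)) with hVfun
    have hVm : AEStronglyMeasurable Vfun μ :=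
      (stronglyMeasurable_const.indicator hN).aestronglyMeasurable
    set V : Ω →ₘ[μ] ℝ := AEEqFun.mk Vfun hVm with hVdef
    have hVcoe : ⇑V =ᵐ[μ] Vfun := AEEqFun.coeFn_mk _ _
    have hVE : V ∈ EE := by
      refine hE.linfty_subset V ⟨1, ?_⟩
      filter_upwards [hVcoe] with ω h
      rw [h, hVfun]
      by_cases hω : ω ∈ N <;> simp [Set.indicator_apply, hω]
    have hV0 : (0 : Ω →ₘ[μ] ℝ) ≤ V := by
      rw [aefun_zero_le]
      filter_upwards [hVcoe] with ω h
      rw [h]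
      exact Set.indicator_nonneg (fun _ _ => zero_le_one) ω
    have hVA : V ∈ A := by
      have := hmono 0 h0 V hVE hV0
      rwa [zero_add] at this
    have hipV : ip V W = ∫ ω in N, W ω ∂μ := by
      unfold ip
      rw [← integral_indicator hN]
      refine integral_congr_ae ?_
      filter_upwards [hVcoe] with ω h
      rw [h, hVfun]
      by_cases hω : ω ∈ N <;> simp [Set.indicator_apply, hω]
    have hrneg : (∫ ω in N, W ω ∂μ) < 0 := by
      set Nk : ℕ → Set Ω := fun k => {ω | W ω ≤ -(1/((k:ℝ)+1))} with hNkdef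
      have hNkm : ∀ k, MeasurableSet (Nk k) :=
        fun k => measurableSet_le W.stronglyMeasurable.measurable measurable_const
      have hsub : N ⊆ ⋃ k, Nk k := by
        intro ω hω
        have hω' : W ω < 0 := hω
        obtain ⟨k, hk⟩ := exists_nat_one_div_lt (ε := -W ω) (by linarith)
        exact Set.mem_iUnion.2 ⟨k, by simp only [hNkdef, Set.mem_setOf_eq]; linarith⟩
      obtain ⟨k, hk⟩ : ∃ k, μ (Nk k) ≠ 0 := by
        by_contra hall
        push_neg at hall
        exact hNne (measure_mono_null hsub (measure_iUnion_null hall))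
      have hNkN : Nk k ⊆ N := by
        intro ω hω
        have hω' : W ω ≤ -(1/((k:ℝ)+1)) := hω
        have hpos : (0:ℝ) < 1/((k:ℝ)+1) := by positivity
        show W ω < 0
        linarith
      have hsplit : (∫ ω in N, W ω ∂μ) =
          (∫ ω in Nk k, W ω ∂μ) + ∫ ω in N \ Nk k, W ω ∂μ := by
        rw [← setIntegral_union Set.disjoint_sdiff_right (hN.diff (hNkm k))
          hWint.integrableOn hWint.integrableOn, Set.union_diff_cancel hNkN]
      have h1 : (∫ ω in Nk k, W ω ∂μ) ≤ -(1/((k:ℝ)+1)) * (μ (Nk k)).toReal := by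
        have := setIntegral_mono_on (f := fun ω => W ω) (g := fun _ => -(1/((k:ℝ)+1)))
          hWint.integrableOn (integrableOn_const (measure_ne_top μ _))
          (hNkm k) (fun ω hω => hω)
        rwa [setIntegral_const, smul_eq_mul, mul_comm] at this
      have h2 : (∫ ω in N \ Nk k, W ω ∂μ) ≤ 0 :=
        setIntegral_nonpos (hN.diff (hNkm k)) (fun ω hω => le_of_lt hω.1)
      have hpos : 0 < (μ (Nk k)).toReal :=
        ENNReal.toReal_pos hk (measure_ne_top μ _)
      have : -(1/((k:ℝ)+1)) * (μ (Nk k)).toReal < 0 := by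
        apply mul_neg_of_neg_of_pos _ hpos
        have : (0:ℝ) < 1/((k:ℝ)+1) := by positivity
        linarith
      linarith
    have := barr_ip_nonneg hcone hW V hVA
    rw [hipV] at this
    linarith
  rw [aefun_zero_le]
  rw [ae_iff]
  convert hNzero using 2
  ext ω
  simp [hNdef, not_le]

open scoped Topology in
lemma placeholder_never : True := trivial

lemma integrable_mul_comm' {a b : Ω → ℝ} (h : Integrable (fun ω => a ω * b ω) μ) :
    Integrable (fun ω => b ω * a ω) μ :=
  h.congr (Eventually.of_forall fun ω => mul_comm _ _)

/-- A continuous linear functional for the weak topology is represented by the pairing. -/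
lemma weakBilin_dual_char {E F : Type*} [AddCommGroup E] [Module ℝ E] [AddCommGroup F]
    [Module ℝ F] (B : E →ₗ[ℝ] F →ₗ[ℝ] ℝ) (f : WeakBilin B →L[ℝ] ℝ) :
    ∃ w : F, ∀ x : WeakBilin B, f x = B x w := by
  classical
  have hcont : Continuous f := f.continuous
  have h1 : f ⁻¹' (Set.Ioo (-1:ℝ) 1) ∈ 𝓝 (0 : WeakBilin B) :=
    (isOpen_Ioo.preimage hcont).mem_nhds
      (by show f 0 ∈ Set.Ioo (-1:ℝ) 1
          rw [map_zero]
          constructor <;> norm_num)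
  have h2 : 𝓝 (0 : WeakBilin B) =
      Filter.comap (fun (x : WeakBilin B) (y : F) => B x y) (𝓝 (fun y : F => B 0 y)) :=
    nhds_induced _ _
  rw [h2] at h1
  obtain ⟨s, hs, hsub⟩ := Filter.mem_comap.1 h1
  have hz : (fun y : F => B (0:E) y) = (fun _ : F => (0:ℝ)) := by
    funext y; simp
  rw [hz, nhds_pi] at hs
  obtain ⟨I, hIfin, t, ht, hIsub⟩ := Filter.mem_pi.1 hs
  have hker : ∀ x : WeakBilin B, (∀ y ∈ I, B x y = 0) → f x = 0 := by
    intro x hx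
    by_contra hfx
    have hmem : ∀ c : ℝ, (c • x) ∈ f ⁻¹' (Set.Ioo (-1:ℝ) 1) := by
      intro c
      apply hsub
      apply hIsub
      intro y hy
      have hsm : B (c • x) y = 0 := by
        exact (LinearMap.map_smul₂ B c x y).trans (by rw [smul_eq_mul, hx y hy, mul_zero])
      simp only [hsm]
      exact mem_of_mem_nhds (ht y)
    have habs : ∀ c : ℝ, c * f x < 1 := by
      intro c
      have h4 := (hmem c).2
      rwa [f.map_smul c x, smul_eq_mul] at h4
    have := habs (2 / f x)
    rw [div_mul_cancel₀ 2 hfx] at this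
    norm_num at this
  haveI : Finite ↥I := hIfin.to_subtype
  haveI : Fintype ↥I := Fintype.ofFinite _
  set L : ↥I → (WeakBilin B →ₗ[ℝ] ℝ) := fun y =>
    { toFun := fun x => B x ↑y
      map_add' := fun a b => by exact LinearMap.map_add₂ B a b ↑y
      map_smul' := fun r a => by exact LinearMap.map_smul₂ B r a ↑y } with hL
  have hker2 : (⨅ y : ↥I, LinearMap.ker (L y)) ≤ LinearMap.ker (f : WeakBilin B →ₗ[ℝ] ℝ) := by
    intro x hx
    rw [LinearMap.mem_ker]
    apply hker
    intro y hy
    have h9 := (Submodule.mem_iInf _).1 hx ⟨y, hy⟩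
    rw [LinearMap.mem_ker] at h9
    exact h9
  have hspan := mem_span_of_iInf_ker_le_ker (𝕜 := ℝ) hker2
  obtain ⟨c, hc⟩ := (Submodule.mem_span_range_iff_exists_fun ℝ).1 hspan
  refine ⟨∑ y : ↥I, c y • (↑y : F), fun x => ?_⟩
  have hfx : f x = ∑ y : ↥I, c y * B x ↑y := by
    have h7 := LinearMap.congr_fun hc x
    simp only [LinearMap.coe_sum, Finset.sum_apply, LinearMap.smul_apply, smul_eq_mul] at h7
    exact h7.symm
  rw [hfx, map_sum]
  congr 1
  funext y
  simp

variable {EE : Set (Ω →ₘ[μ] ℝ)} {nrmE : (Ω →ₘ[μ] ℝ) → ℝ}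

/-- `EE` as a submodule. -/
def Esub (hE : IsAdmissible EE nrmE) : Submodule ℝ (Ω →ₘ[μ] ℝ) where
  carrier := EE
  add_mem' := fun hf hg => hE.add_mem _ hf _ hg
  zero_mem' := hE.zero_mem
  smul_mem' := fun c _ hf => hE.smul_mem c _ hf

/-- The Köthe dual as a submodule. -/
def kdualSub (EE : Set (Ω →ₘ[μ] ℝ)) : Submodule ℝ (Ω →ₘ[μ] ℝ) where
  carrier := kdual EE
  add_mem' := fun hf hg => kdual_add_mem hf hg
  zero_mem' := kdual_zero_mem EE
  smul_mem' := fun c _ hf => kdual_smul_mem c hf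

/-- The pairing as a bilinear form. -/
def Bform (hE : IsAdmissible EE nrmE) : Esub hE →ₗ[ℝ] kdualSub EE →ₗ[ℝ] ℝ :=
  LinearMap.mk₂ ℝ (fun U W => ip (U : Ω →ₘ[μ] ℝ) (W : Ω →ₘ[μ] ℝ))
    (fun U₁ U₂ W => by
      exact ip_add_left (W.2 _ U₁.2) (W.2 _ U₂.2))
    (fun c U W => by
      rw [smul_eq_mul]; exact ip_smul_left c _ _)
    (fun U W₁ W₂ => by
      rw [ip_comm]
      rw [show ((W₁ + W₂ : kdualSub EE) : Ω →ₘ[μ] ℝ) = (W₁ : Ω →ₘ[μ] ℝ) + (W₂ : Ω →ₘ[μ] ℝ) from rfl]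
      rw [ip_add_left (integrable_mul_comm' (W₁.2 _ U.2)) (integrable_mul_comm' (W₂.2 _ U.2))]
      rw [ip_comm (W₁ : Ω →ₘ[μ] ℝ), ip_comm (W₂ : Ω →ₘ[μ] ℝ)])
    (fun c U W => by
      rw [smul_eq_mul, show ((c • W : kdualSub EE) : Ω →ₘ[μ] ℝ) = c • (W : Ω →ₘ[μ] ℝ) from rfl,
        ip_comm, ip_smul_left, ip_comm])

set_option maxHeartbeats 1000000 in
/-- Bipolar-type separation: a point of `EE` outside the weakly closed convex set `A`
can be separated by an element of the Köthe dual. -/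
lemma bipolar (hE : IsAdmissible EE nrmE) {A : Set (Ω →ₘ[μ] ℝ)} (hAsub : A ⊆ EE)
    (hconv : ∀ U ∈ A, ∀ V ∈ A, ∀ t : ℝ, 0 ≤ t → t ≤ 1 → t • U + (1 - t) • V ∈ A)
    (hclosed : @IsClosed (↥EE) (wtop1 EE (kdual EE)) {U : ↥EE | (U : Ω →ₘ[μ] ℝ) ∈ A})
    {U : Ω →ₘ[μ] ℝ} (hU : U ∈ EE) (hUA : U ∉ A) :
    ∃ W ∈ kdual EE, ∃ u : ℝ, ip U W < u ∧ ∀ V ∈ A, u < ip V W := by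
  set B := Bform hE with hB
  have π : WeakBilin B → (Ω →ₘ[μ] ℝ) := fun x => Subtype.val x
  have hclosed' : IsClosed {x : WeakBilin B | Subtype.val x ∈ A} := hclosed
  have hconvex : Convex ℝ {x : WeakBilin B | Subtype.val x ∈ A} := by
    intro x hx y hy a b ha hb hab
    show Subtype.val (a • x + b • y) ∈ A
    have hcoe : Subtype.val (a • x + b • y)
        = a • (Subtype.val x) + b • (Subtype.val y) := rfl
    rw [hcoe]
    have hb' : b = 1 - a := by linarith
    rw [hb']
    exact hconv _ hx _ hy a ha (by linarith)
  have hx0 : (⟨U, hU⟩ : WeakBilin B) ∉ {x : WeakBilin B | Subtype.val x ∈ A} := hUA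
  obtain ⟨f, u, hfu, hfA⟩ := geometric_hahn_banach_point_closed hconvex hclosed' hx0
  obtain ⟨w, hw⟩ := weakBilin_dual_char B f
  refine ⟨Subtype.val w, w.2, u, ?_, ?_⟩
  · have h5 := hw ⟨U, hU⟩
    rw [h5] at hfu
    have : B ⟨U, hU⟩ w = ip U (Subtype.val w) := rfl
    rwa [this] at hfu
  · intro V hV
    have hmem : (⟨V, hAsub hV⟩ : WeakBilin B) ∈ {x : WeakBilin B | Subtype.val x ∈ A} := hV
    have h6 := hfA _ hmem
    rw [hw ⟨V, hAsub hV⟩] at h6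
    have : B ⟨V, hAsub hV⟩ w = ip V (Subtype.val w) := rfl
    rwa [this] at h6


section ProdSet
variable {d : ℕ} {Li : Fin d → Set (Ω →ₘ[μ] ℝ)} {nrmX : Fin d → ((Ω →ₘ[μ] ℝ) → ℝ)}

lemma prodSet_zero_mem (hLi : ∀ i, IsAdmissible (Li i) (nrmX i)) :
    (0 : Fin d → (Ω →ₘ[μ] ℝ)) ∈ prodSet Li := fun i => (hLi i).zero_mem

lemma prodSet_add_mem (hLi : ∀ i, IsAdmissible (Li i) (nrmX i))
    {X Y : Fin d → (Ω →ₘ[μ] ℝ)} (hX : X ∈ prodSet Li) (hY : Y ∈ prodSet Li) :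
    X + Y ∈ prodSet Li := fun i => (hLi i).add_mem _ (hX i) _ (hY i)

lemma prodSet_smul_mem (hLi : ∀ i, IsAdmissible (Li i) (nrmX i)) (c : ℝ)
    {X : Fin d → (Ω →ₘ[μ] ℝ)} (hX : X ∈ prodSet Li) : c • X ∈ prodSet Li :=
  fun i => (hLi i).smul_mem c _ (hX i)

lemma prodSet_sum_mem (hLi : ∀ i, IsAdmissible (Li i) (nrmX i)) {ι : Type*} (t : Finset ι)
    (Xs : ι → (Fin d → (Ω →ₘ[μ] ℝ))) (h : ∀ j ∈ t, Xs j ∈ prodSet Li) :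
    (∑ j ∈ t, Xs j) ∈ prodSet Li := by
  classical
  induction t using Finset.induction_on with
  | empty => simpa using prodSet_zero_mem hLi
  | @insert a s ha ih =>
      rw [Finset.sum_insert ha]
      exact prodSet_add_mem hLi (h a (Finset.mem_insert_self a s))
        (ih fun j hj => h j (Finset.mem_insert_of_mem hj))

variable {Z : Fin d → (Ω →ₘ[μ] ℝ)}

lemma pairing_zero_left (Z : Fin d → (Ω →ₘ[μ] ℝ)) :
    pairing (0 : Fin d → (Ω →ₘ[μ] ℝ)) Z = 0 := by
  unfold pairing
  refine Finset.sum_eq_zero fun i _ => ?_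
  exact ip_zero_left (Z i)

lemma pairing_smul_left (c : ℝ) (X Z : Fin d → (Ω →ₘ[μ] ℝ)) :
    pairing (c • X) Z = c * pairing X Z := by
  unfold pairing
  rw [Finset.mul_sum]
  refine Finset.sum_congr rfl fun i _ => ?_
  exact ip_smul_left c (X i) (Z i)

lemma pairing_sum_left {ι : Type*} (t : Finset ι) (Xs : ι → (Fin d → (Ω →ₘ[μ] ℝ)))
    (Z : Fin d → (Ω →ₘ[μ] ℝ))
    (h : ∀ j ∈ t, ∀ i, Integrable (fun ω => Xs j i ω * Z i ω) μ) :
    pairing (∑ j ∈ t, Xs j) Z = ∑ j ∈ t, pairing (Xs j) Z := by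
  unfold pairing
  rw [Finset.sum_comm]
  refine Finset.sum_congr rfl fun i _ => ?_
  have : (∑ j ∈ t, Xs j) i = ∑ j ∈ t, Xs j i := by
    simp [Finset.sum_apply]
  rw [this, ip_sum_left t (fun j => Xs j i) (Z i) (fun j hj => h j hj i)]

lemma pairing_integrable {Li : Fin d → Set (Ω →ₘ[μ] ℝ)}
    {X Z : Fin d → (Ω →ₘ[μ] ℝ)} (hX : X ∈ prodSet Li)
    (hZ : Z ∈ prodSet fun i => kdual (Li i)) (i : Fin d) :
    Integrable (fun ω => X i ω * Z i ω) μ := hZ i _ (hX i)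

end ProdSet

section SLemmas
variable {d : ℕ} {Li : Fin d → Set (Ω →ₘ[μ] ℝ)} {nrmX : Fin d → ((Ω →ₘ[μ] ℝ) → ℝ)}
variable {XX' : Set (Fin d → (Ω →ₘ[μ] ℝ))} {EE EE' : Set (Ω →ₘ[μ] ℝ)}
variable {S : (Fin d → (Ω →ₘ[μ] ℝ)) → (Ω →ₘ[μ] ℝ)}

lemma S_superadd (hLi : ∀ i, IsAdmissible (Li i) (nrmX i))
    (hS : IsAdmissibleImpact (prodSet Li) XX' EE EE' S)
    (hph : ∀ c : ℝ, 0 < c → ∀ X ∈ prodSet Li, S (c • X) = c • S X)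
    {X Y : Fin d → (Ω →ₘ[μ] ℝ)} (hX : X ∈ prodSet Li) (hY : Y ∈ prodSet Li) :
    S X + S Y ≤ S (X + Y) := by
  have h := hS.concave X hX Y hY (1/2) (by norm_num) (by norm_num)
  have h2 : (1/2 : ℝ) • X + (1 - 1/2 : ℝ) • Y = (1/2 : ℝ) • (X + Y) := by
    rw [smul_add]; norm_num
  rw [h2, hph (1/2) (by norm_num) _ (prodSet_add_mem hLi hX hY)] at h
  have h3 := aefun_smul_le_smul (by norm_num : (0:ℝ) ≤ 2) h
  rw [smul_add, smul_smul, smul_smul, smul_smul] at h3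
  norm_num at h3
  exact h3

lemma S_smul_nonneg (hS : IsAdmissibleImpact (prodSet Li) XX' EE EE' S)
    (hph : ∀ c : ℝ, 0 < c → ∀ X ∈ prodSet Li, S (c • X) = c • S X)
    {c : ℝ} (hc : 0 ≤ c) {X : Fin d → (Ω →ₘ[μ] ℝ)} (hX : X ∈ prodSet Li) :
    S (c • X) = c • S X := by
  rcases lt_or_eq_of_le hc with h | h
  · exact hph c h X hX
  · rw [← h, zero_smul, zero_smul, hS.normalized]

lemma S_combo (hLi : ∀ i, IsAdmissible (Li i) (nrmX i))
    (hS : IsAdmissibleImpact (prodSet Li) XX' EE EE' S)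
    (hph : ∀ c : ℝ, 0 < c → ∀ X ∈ prodSet Li, S (c • X) = c • S X)
    {ι : Type*} (t : Finset ι) (w : ι → ℝ) (hw : ∀ j ∈ t, 0 ≤ w j)
    (Xs : ι → (Fin d → (Ω →ₘ[μ] ℝ))) (hXs : ∀ j ∈ t, Xs j ∈ prodSet Li) :
    (∑ j ∈ t, w j • S (Xs j)) ≤ S (∑ j ∈ t, w j • Xs j) := by
  classical
  induction t using Finset.induction_on with
  | empty => simp [hS.normalized]
  | @insert a s ha ih =>
      rw [Finset.sum_insert ha, Finset.sum_insert ha]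
      have hmem1 : w a • Xs a ∈ prodSet Li :=
        prodSet_smul_mem hLi _ (hXs a (Finset.mem_insert_self a s))
      have hmem2 : (∑ j ∈ s, w j • Xs j) ∈ prodSet Li :=
        prodSet_sum_mem hLi s _ fun j hj =>
          prodSet_smul_mem hLi _ (hXs j (Finset.mem_insert_of_mem hj))
      refine le_trans ?_ (S_superadd hLi hS hph hmem1 hmem2)
      refine aefun_add_le_add ?_ (ih (fun j hj => hw j (Finset.mem_insert_of_mem hj))
        (fun j hj => hXs j (Finset.mem_insert_of_mem hj)))
      rw [S_smul_nonneg hS hph (hw a (Finset.mem_insert_self a s))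
        (hXs a (Finset.mem_insert_self a s))]

end SLemmas

section Star
variable {d : ℕ} {Li : Fin d → Set (Ω →ₘ[μ] ℝ)} {nrmX : Fin d → ((Ω →ₘ[μ] ℝ) → ℝ)}
variable {EE A : Set (Ω →ₘ[μ] ℝ)} {nrmE : (Ω →ₘ[μ] ℝ) → ℝ}
variable {S : (Fin d → (Ω →ₘ[μ] ℝ)) → (Ω →ₘ[μ] ℝ)}

/-- Finite-constraint dual existence via finite-dimensional separation. -/
lemma star_lemma [IsProbabilityMeasure μ]
    (hLi : ∀ i, IsAdmissible (Li i) (nrmX i)) (hE : IsAdmissible EE nrmE)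
    (hS : IsAdmissibleImpact (prodSet Li) (prodSet fun i => kdual (Li i)) EE (kdual EE) S)
    (hA : IsAdmissibleAcceptance (prodSet Li) EE (kdual EE) S A)
    (hph : ∀ c : ℝ, 0 < c → ∀ X ∈ prodSet Li, S (c • X) = c • S X)
    (hcone : ∀ c : ℝ, 0 < c → ∀ U ∈ A, c • U ∈ A)
    {Z : Fin d → (Ω →ₘ[μ] ℝ)} (hZ : Z ∈ prodSet fun i => kdual (Li i))
    (hpos : ∀ X ∈ sysAcc (prodSet Li) S A, 0 ≤ pairing X Z)
    {ι : Type*} [Fintype ι] (Xs : ι → (Fin d → (Ω →ₘ[μ] ℝ))) (hXs : ∀ j, Xs j ∈ prodSet Li)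
    (bnd : ι → ℝ) (hbnd : ∀ j, pairing (Xs j) Z < bnd j) :
    ∃ W ∈ barrS A (kdual EE), ∀ j, ip (S (Xs j)) W ≤ bnd j := by
  classical
  by_contra hcon
  push_neg at hcon
  -- the image cone and the open target set in `ι → ℝ`
  set Tm : (Ω →ₘ[μ] ℝ) → (ι → ℝ) := fun W => fun j => ip (S (Xs j)) W with hTm
  set C : Set (ι → ℝ) := Tm '' (barrS A (kdual EE)) with hC
  set O : Set (ι → ℝ) := Set.pi Set.univ (fun j => Set.Iio (bnd j)) with hO
  have hSXmem : ∀ j, S (Xs j) ∈ EE := fun j => hS.mapsTo _ (hXs j)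
  have hTm_add : ∀ (a b : ℝ) (W₁ W₂ : Ω →ₘ[μ] ℝ), W₁ ∈ kdual EE → W₂ ∈ kdual EE →
      Tm (a • W₁ + b • W₂) = a • Tm W₁ + b • Tm W₂ := by
    intro a b W₁ W₂ h₁ h₂
    funext j
    simp only [hTm, Pi.add_apply, Pi.smul_apply, smul_eq_mul]
    rw [ip_comm]
    rw [ip_add_left (integrable_mul_comm' ((kdual_smul_mem a h₁) _ (hSXmem j)))
      (integrable_mul_comm' ((kdual_smul_mem b h₂) _ (hSXmem j)))]
    rw [ip_smul_left, ip_smul_left, ip_comm W₁, ip_comm W₂]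
  have hOopen : IsOpen O := isOpen_set_pi Set.finite_univ (fun j _ => isOpen_Iio)
  have hOconv : Convex ℝ O := convex_pi (fun j _ => convex_Iio _)
  have hCconv : Convex ℝ C := by
    rintro y₁ ⟨W₁, hW₁, rfl⟩ y₂ ⟨W₂, hW₂, rfl⟩ a b ha hb hab
    refine ⟨a • W₁ + b • W₂, ?_, hTm_add a b W₁ W₂ hW₁.1 hW₂.1⟩
    refine mem_barr_of_nonneg (kdual_add_mem (kdual_smul_mem a hW₁.1) (kdual_smul_mem b hW₂.1))
      fun U hU => ?_
    have e1 : ip U (a • W₁ + b • W₂) = a * ip U W₁ + b * ip U W₂ := by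
      rw [ip_comm]
      rw [ip_add_left (integrable_mul_comm' ((kdual_smul_mem a hW₁.1) _ (hA.subset hU)))
        (integrable_mul_comm' ((kdual_smul_mem b hW₂.1) _ (hA.subset hU)))]
      rw [ip_smul_left, ip_smul_left, ip_comm W₁, ip_comm W₂]
    rw [e1]
    have := barr_ip_nonneg hcone hW₁ U hU
    have := barr_ip_nonneg hcone hW₂ U hU
    positivity
  have hdisj : Disjoint O C := by
    rw [Set.disjoint_left]
    rintro y hyO ⟨W, hWb, rfl⟩
    obtain ⟨j, hj⟩ := hcon W hWb
    rw [hO, Set.mem_univ_pi] at hyO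
    have := hyO j
    simp only [Set.mem_Iio] at this
    exact absurd this (not_lt.2 (le_of_lt hj))
  obtain ⟨f, u, hfO, hfC⟩ := geometric_hahn_banach_open hOconv hOopen hCconv hdisj
  -- coordinates of f
  set lam : ι → ℝ := fun j => f (Pi.single j (1:ℝ) : ι → ℝ) with hlam
  have hrep : ∀ y : ι → ℝ, f y = ∑ j, y j * lam j := by
    intro y
    have hy : y = ∑ j, y j • (Pi.single j (1:ℝ) : ι → ℝ) := by
      funext j'
      simp [Finset.sum_apply, Pi.single_apply]
    calc f y = f (∑ j, y j • (Pi.single j (1:ℝ) : ι → ℝ)) := by rw [← hy]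
      _ = ∑ j, y j * lam j := by rw [map_sum]; congr 1; funext j; rw [f.map_smul, smul_eq_mul]
  have hu0 : u ≤ 0 := by
    have h0C : (0 : ι → ℝ) ∈ C := by
      refine ⟨0, zero_mem_barr (kdual_zero_mem EE), ?_⟩
      funext j
      simp [hTm, ip_zero_right]
    have := hfC 0 h0C
    rwa [map_zero] at this
  -- coordinates are nonnegative
  have hlam_nonneg : ∀ j, 0 ≤ lam j := by
    intro j
    by_contra hneg
    push_neg at hneg
    set base : ι → ℝ := fun j' => bnd j' - 1 with hbase
    have hbmem : ∀ t : ℝ, 0 ≤ t → (base - t • (Pi.single j (1:ℝ) : ι → ℝ)) ∈ O := by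
      intro t ht
      rw [hO, Set.mem_univ_pi]
      intro j'
      simp only [Pi.sub_apply, Pi.smul_apply, smul_eq_mul, Set.mem_Iio, hbase]
      have : (0:ℝ) ≤ t * (Pi.single j (1:ℝ) : ι → ℝ) j' := by
        refine mul_nonneg ht ?_
        by_cases h : j = j' <;> simp [Pi.single_apply, h]
      linarith
    have hlt : ∀ t : ℝ, 0 ≤ t → f base - t * lam j < u := by
      intro t ht
      have h5 := hfO _ (hbmem t ht)
      rw [map_sub, f.map_smul, smul_eq_mul] at h5
      exact h5
    have h1 := hlt 0 le_rfl
    rw [zero_mul, sub_zero] at h1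
    have h2 := hlt ((f base - u - 1) / lam j) ?_
    · rw [div_mul_cancel₀ _ (ne_of_lt hneg)] at h2
      linarith
    · have h6 : f base - u - 1 < 0 := by linarith
      exact le_of_lt (div_pos_of_neg_of_neg h6 hneg)
  -- f is nonnegative on the cone C
  have hfC0 : ∀ y ∈ C, 0 ≤ f y := by
    rintro y ⟨W, hWb, rfl⟩ 
    by_contra hneg
    push_neg at hneg
    set cc : ℝ := (u - 1) / f (Tm W) with hcc
    have hccpos : 0 < cc := by
      refine div_pos_of_neg_of_neg (by linarith) hneg
    have hmemC : Tm (cc • W) ∈ C := by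
      refine ⟨cc • W, ?_, rfl⟩
      refine mem_barr_of_nonneg (kdual_smul_mem cc hWb.1) fun U hU => ?_
      rw [ip_comm, ip_smul_left, ip_comm W]
      exact mul_nonneg (le_of_lt hccpos) (barr_ip_nonneg hcone hWb U hU)
    have hTmsmul : Tm (cc • W) = cc • Tm W := by
      funext j
      simp only [hTm, Pi.smul_apply, smul_eq_mul]
      rw [ip_comm, ip_smul_left, ip_comm W]
    have := hfC _ hmemC
    rw [hTmsmul, f.map_smul, smul_eq_mul, hcc, div_mul_cancel₀ _ (ne_of_lt hneg)] at this
    linarith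
  set s : ℝ := ∑ j, lam j with hsum
  have hs_nonneg : 0 ≤ s := Finset.sum_nonneg fun j _ => hlam_nonneg j
  have hs_pos : 0 < s := by
    rcases lt_or_eq_of_le hs_nonneg with h | h
    · exact h
    have hall : ∀ j ∈ Finset.univ, lam j = 0 :=
      (Finset.sum_eq_zero_iff_of_nonneg (fun j _ => hlam_nonneg j)).1 h.symm
    have hf0 : ∀ y : ι → ℝ, f y = 0 := by
      intro y
      rw [hrep]
      exact Finset.sum_eq_zero fun j hj => by rw [hall j hj, mul_zero]
    have hbO : (fun j => bnd j - 1) ∈ O := by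
      intro j' _
      simp only [Set.mem_Iio]
      linarith
    have := hfO _ hbO
    rw [hf0] at this
    linarith
  -- the convex combination
  set Xstar : Fin d → (Ω →ₘ[μ] ℝ) := ∑ j, (lam j / s) • Xs j with hXstar
  have hXstar_mem : Xstar ∈ prodSet Li :=
    prodSet_sum_mem hLi _ _ fun j _ => prodSet_smul_mem hLi _ (hXs j)
  -- pairing of Xstar is negative
  have hbnd_sum : (∑ j, lam j * bnd j) ≤ 0 := by
    by_contra hgt
    push_neg at hgt
    set dl : ℝ := (∑ j, lam j * bnd j) / s with hdl
    have hdlpos : 0 < dl := div_pos hgt hs_pos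
    have hyO : (fun j => bnd j - dl) ∈ O := by
      intro j' _
      simp only [Set.mem_Iio]
      linarith
    have := hfO _ hyO
    rw [hrep] at this
    have hexp : (∑ j, (bnd j - dl) * lam j) = (∑ j, lam j * bnd j) - dl * s := by
      rw [hsum, Finset.mul_sum, ← Finset.sum_sub_distrib]
      refine Finset.sum_congr rfl fun j _ => by ring
    rw [hexp, hdl, div_mul_comm, div_self (ne_of_gt hs_pos), one_mul] at this
    simp only [sub_self] at this
    linarith
  have hpXstar : pairing Xstar Z < 0 := by
    have hsum_eq : pairing Xstar Z = ∑ j, (lam j / s) * pairing (Xs j) Z := by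
      rw [hXstar, pairing_sum_left _ _ _ (fun j _ i =>
        pairing_integrable (prodSet_smul_mem hLi (lam j / s) (hXs j)) hZ i)]
      refine Finset.sum_congr rfl fun j _ => ?_
      rw [pairing_smul_left]
    obtain ⟨j₀, hj₀⟩ : ∃ j, 0 < lam j := by
      by_contra hno
      push_neg at hno
      have : s ≤ 0 := Finset.sum_nonpos fun j _ => hno j
      linarith
    have hstrict : (∑ j, (lam j / s) * pairing (Xs j) Z) < ∑ j, (lam j / s) * bnd j := by
      refine Finset.sum_lt_sum (fun j _ => ?_) ⟨j₀, Finset.mem_univ j₀, ?_⟩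
      · exact mul_le_mul_of_nonneg_left (le_of_lt (hbnd j)) (div_nonneg (hlam_nonneg j) hs_nonneg)
      · exact mul_lt_mul_of_pos_left (hbnd j₀) (div_pos hj₀ hs_pos)
    have hsum_le : (∑ j, (lam j / s) * bnd j) ≤ 0 := by
      have : (∑ j, (lam j / s) * bnd j) = (∑ j, lam j * bnd j) / s := by
        rw [Finset.sum_div]
        refine Finset.sum_congr rfl fun j _ => by ring
      rw [this]
      exact div_nonpos_of_nonpos_of_nonneg hbnd_sum hs_nonneg
    rw [hsum_eq]
    linarith
  -- S Xstar is nonnegative against every element of the barrier cone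
  have hkey : ∀ W ∈ barrS A (kdual EE), 0 ≤ ip (S Xstar) W := by
    intro W hW
    have hW0 : (0 : Ω →ₘ[μ] ℝ) ≤ W := barr_nonneg hE hA.zero_mem hA.mono hcone hW
    have hcombo : (∑ j, (lam j / s) • S (Xs j)) ≤ S Xstar := by
      rw [hXstar]
      exact S_combo hLi hS hph _ _ (fun j _ => div_nonneg (hlam_nonneg j) hs_nonneg) _
        (fun j _ => hXs j)
    have hsum_mem : (∑ j, (lam j / s) • S (Xs j)) ∈ EE := by
      have : ∀ j ∈ Finset.univ, (lam j / s) • S (Xs j) ∈ Esub hE :=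
        fun j _ => (Esub hE).smul_mem _ (hSXmem j)
      exact Submodule.sum_mem (Esub hE) this
    have hmono := ip_mono_left hcombo hW0 (hW.1 _ hsum_mem) (hW.1 _ (hS.mapsTo _ hXstar_mem))
    refine le_trans ?_ hmono
    rw [ip_sum_left _ _ _ (fun j _ => hW.1 _ ((Esub hE).smul_mem _ (hSXmem j)))]
    have hterm : ∀ j, ip ((lam j / s) • S (Xs j)) W = (lam j / s) * ip (S (Xs j)) W :=
      fun j => ip_smul_left _ _ _
    have h0f : 0 ≤ f (Tm W) := hfC0 _ ⟨W, hW, rfl⟩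
    rw [hrep] at h0f
    have : (∑ j, ip ((lam j / s) • S (Xs j)) W) = (1/s) * ∑ j, Tm W j * lam j := by
      rw [Finset.mul_sum]
      refine Finset.sum_congr rfl fun j _ => ?_
      rw [hterm j]
      simp only [hTm]
      ring
    rw [this]
    positivity
  -- bipolar: S Xstar ∈ A
  have hSA : S Xstar ∈ A := by
    by_contra hnot
    obtain ⟨W, hWkd, u', h1, h2⟩ :=
      bipolar hE hA.subset hA.convex hA.closed (hS.mapsTo _ hXstar_mem) hnot
    have hu'neg : u' < 0 := by
      have := h2 0 hA.zero_mem
      rwa [ip_zero_left] at this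
    have hWbarr : W ∈ barrS A (kdual EE) := by
      refine ⟨hWkd, lt_of_lt_of_le (EReal.bot_lt_coe u') (le_iInf₂ fun V hV => ?_)⟩
      exact_mod_cast le_of_lt (h2 V hV)
    have := hkey W hWbarr
    linarith
  exact absurd (hpos Xstar ⟨hXstar_mem, hSA⟩) (not_le.2 hpXstar)

end Star

set_option maxHeartbeats 1000000 in
/-- Existence of an optimal dual element, via weak compactness. -/
lemma exists_dual [IsProbabilityMeasure μ]
    {d : ℕ} {Li : Fin d → Set (Ω →ₘ[μ] ℝ)} {nrmX : Fin d → ((Ω →ₘ[μ] ℝ) → ℝ)}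
    {EE A : Set (Ω →ₘ[μ] ℝ)} {nrmE : (Ω →ₘ[μ] ℝ) → ℝ}
    {S : (Fin d → (Ω →ₘ[μ] ℝ)) → (Ω →ₘ[μ] ℝ)}
    (hLi : ∀ i, IsAdmissible (Li i) (nrmX i)) (hE : IsAdmissible EE nrmE)
    (hS : IsAdmissibleImpact (prodSet Li) (prodSet fun i => kdual (Li i)) EE (kdual EE) S)
    (hA : IsAdmissibleAcceptance (prodSet Li) EE (kdual EE) S A)
    (hph : ∀ c : ℝ, 0 < c → ∀ X ∈ prodSet Li, S (c • X) = c • S X)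
    (hcone : ∀ c : ℝ, 0 < c → ∀ U ∈ A, c • U ∈ A)
    (hSe : ∃ c : ℝ, 0 < c ∧
        S (cvec μ fun _ => (1 : ℝ)) = (AEEqFun.const Ω c : Ω →ₘ[μ] ℝ))
    (hcompact : @IsCompact (↥(kdual EE)) (wtop1 (kdual EE) EE)
        {W : ↥(kdual EE) | (W : Ω →ₘ[μ] ℝ) ∈ barrS A (kdual EE) ∧
          (∫ ω, |(W : Ω →ₘ[μ] ℝ) ω| ∂μ) ≤ 1})
    {Z : Fin d → (Ω →ₘ[μ] ℝ)} (hZ : Z ∈ prodSet fun i => kdual (Li i))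
    (hpos : ∀ X ∈ sysAcc (prodSet Li) S A, 0 ≤ pairing X Z) :
    ∃ W ∈ barrS A (kdual EE), ∀ X ∈ prodSet Li, ip (S X) W ≤ pairing X Z := by
  classical
  obtain ⟨c, hcpos, hSeq⟩ := hSe
  letI τ : TopologicalSpace ↥(kdual EE) := wtop1 (kdual EE) EE
  set e : Fin d → (Ω →ₘ[μ] ℝ) := cvec μ fun _ => (1:ℝ) with he
  have hemem : e ∈ prodSet Li := fun i => const_mem_of_admissible (hLi i) 1
  have hconstA : ∀ r : ℝ, 0 ≤ r → (AEEqFun.const Ω r : Ω →ₘ[μ] ℝ) ∈ A := by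
    intro r hr
    have h1 : (AEEqFun.const Ω r : Ω →ₘ[μ] ℝ) ∈ EE := const_mem_of_admissible hE r
    have h2 : (0 : Ω →ₘ[μ] ℝ) ≤ AEEqFun.const Ω r := by
      rw [aefun_zero_le]
      filter_upwards [AEEqFun.coeFn_const (μ := μ) Ω r] with ω h
      rw [h]; exact hr
    have := hA.mono 0 hA.zero_mem _ h1 h2
    rwa [zero_add] at this
  have hesys : e ∈ sysAcc (prodSet Li) S A :=
    ⟨hemem, by rw [hSeq]; exact hconstA c (le_of_lt hcpos)⟩
  have hpe : 0 ≤ pairing e Z := hpos e hesys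
  set M : ℝ := max 1 ((pairing e Z + 1)/c) with hM
  have hM1 : (1:ℝ) ≤ M := le_max_left _ _
  have hMpos : 0 < M := lt_of_lt_of_le one_pos hM1
  set KK : Set ↥(kdual EE) := {W : ↥(kdual EE) | (W : Ω →ₘ[μ] ℝ) ∈ barrS A (kdual EE) ∧
      (∫ ω, |(W : Ω →ₘ[μ] ℝ) ω| ∂μ) ≤ 1} with hKK
  have hKc : IsCompact KK := hcompact
  set sM : ↥(kdual EE) → ↥(kdual EE) :=
    fun W => ⟨M • (W : Ω →ₘ[μ] ℝ), kdual_smul_mem M W.2⟩ with hsM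
  have hdom : @Continuous ↥(kdual EE) (↥EE → ℝ) τ Pi.topologicalSpace
      (fun W => fun U : ↥EE => ip (W : Ω →ₘ[μ] ℝ) (U : Ω →ₘ[μ] ℝ)) := by
    rw [show τ = TopologicalSpace.induced
      (fun W : ↥(kdual EE) => fun U : ↥EE => ip (W : Ω →ₘ[μ] ℝ) (U : Ω →ₘ[μ] ℝ))
      Pi.topologicalSpace from rfl]
    exact continuous_induced_dom
  have hcoord : ∀ U₀ : ↥EE, Continuous
      (fun W : ↥(kdual EE) => ip (W : Ω →ₘ[μ] ℝ) (U₀ : Ω →ₘ[μ] ℝ)) :=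
    fun U₀ => (continuous_apply U₀).comp hdom
  have hsMcont : Continuous sM := by
    refine continuous_induced_rng.2 ?_
    have hkey : ((fun W : ↥(kdual EE) => fun U : ↥EE => ip (W : Ω →ₘ[μ] ℝ) (U : Ω →ₘ[μ] ℝ)) ∘ sM)
        = fun W : ↥(kdual EE) => fun U : ↥EE => M * ip (W : Ω →ₘ[μ] ℝ) (U : Ω →ₘ[μ] ℝ) := by
      funext W U
      show ip (M • (W : Ω →ₘ[μ] ℝ)) (U : Ω →ₘ[μ] ℝ) = _
      exact ip_smul_left M _ _
    rw [hkey]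
    exact continuous_pi fun U => continuous_const.mul (hcoord U)
  set BM : Set ↥(kdual EE) := sM '' KK with hBM
  have hBMc : IsCompact BM := hKc.image hsMcont
  set P := ↥(prodSet Li) × ℕ with hP
  set Zs : P → Set ↥(kdual EE) := fun p =>
    {W : ↥(kdual EE) | ip (S (p.1 : Fin d → (Ω →ₘ[μ] ℝ))) (W : Ω →ₘ[μ] ℝ)
      ≤ pairing (p.1 : Fin d → (Ω →ₘ[μ] ℝ)) Z + 1/((p.2:ℝ)+1)} with hZs
  have hZsc : ∀ p, IsClosed (Zs p) := by
    intro p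
    have hSXE : S (p.1 : Fin d → (Ω →ₘ[μ] ℝ)) ∈ EE := hS.mapsTo _ p.1.2
    have hset : Zs p = (fun W : ↥(kdual EE) =>
        ip (W : Ω →ₘ[μ] ℝ) (S (p.1 : Fin d → (Ω →ₘ[μ] ℝ)))) ⁻¹'
        (Set.Iic (pairing (p.1 : Fin d → (Ω →ₘ[μ] ℝ)) Z + 1/((p.2:ℝ)+1))) := by
      ext W
      simp only [hZs, Set.mem_setOf_eq, Set.mem_preimage, Set.mem_Iic]
      rw [ip_comm]
    rw [hset]
    refine IsClosed.preimage ?_ isClosed_Iic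
    exact hcoord (⟨S (p.1 : Fin d → (Ω →ₘ[μ] ℝ)), hSXE⟩ : ↥EE)
  have hinter : (BM ∩ ⋂ p : P, Zs p).Nonempty := by
    by_contra hemp
    rw [Set.not_nonempty_iff_eq_empty] at hemp
    obtain ⟨t, ht⟩ := hBMc.elim_finite_subfamily_closed Zs hZsc hemp
    set ι' := Option {p : P // p ∈ t} with hι'
    set Xs : ι' → (Fin d → (Ω →ₘ[μ] ℝ)) := fun j =>
      j.elim e (fun p => (p.1.1 : Fin d → (Ω →ₘ[μ] ℝ))) with hXsdef
    set bnd : ι' → ℝ := fun j =>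
      j.elim (pairing e Z + 1)
        (fun p => pairing (p.1.1 : Fin d → (Ω →ₘ[μ] ℝ)) Z + 1/((p.1.2:ℝ)+1)) with hbnddef
    have hXs : ∀ j, Xs j ∈ prodSet Li := by
      intro j
      cases j with
      | none => exact hemem
      | some p => exact p.1.1.2
    have hbnd : ∀ j, pairing (Xs j) Z < bnd j := by
      intro j
      cases j with
      | none => simp only [hXsdef, hbnddef, Option.elim]; linarith
      | some p =>
          simp only [hXsdef, hbnddef, Option.elim]
          have : (0:ℝ) < 1/((p.1.2:ℝ)+1) := by positivity
          linarith
    obtain ⟨W, hWb, hWle⟩ := star_lemma hLi hE hS hA hph hcone hZ hpos Xs hXs bnd hbnd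
    have hW0 : (0 : Ω →ₘ[μ] ℝ) ≤ W := barr_nonneg hE hA.zero_mem hA.mono hcone hWb
    have hSeW : ip (S e) W ≤ pairing e Z + 1 := hWle none
    have hipSe : ip (S e) W = c * ∫ ω, W ω ∂μ := by
      rw [hSeq]
      unfold ip
      rw [← integral_const_mul]
      refine integral_congr_ae ?_
      filter_upwards [AEEqFun.coeFn_const (μ := μ) Ω c] with ω h
      rw [h, Function.const_apply]
    have hWnorm : (∫ ω, |W ω| ∂μ) ≤ M := by
      have habs : (∫ ω, |W ω| ∂μ) = ∫ ω, W ω ∂μ := by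
        refine integral_congr_ae ?_
        filter_upwards [aefun_zero_le.1 hW0] with ω h
        exact abs_of_nonneg h
      rw [habs]
      rw [hipSe] at hSeW
      have h8 : (∫ ω, W ω ∂μ) ≤ (pairing e Z + 1)/c := by
        rw [le_div_iff₀ hcpos]
        linarith [hSeW]
      exact le_trans h8 (le_max_right _ _)
    set W' : ↥(kdual EE) := ⟨(1/M) • W, kdual_smul_mem _ hWb.1⟩ with hW'
    have hW'K : W' ∈ KK := by
      constructor
      · refine mem_barr_of_nonneg (kdual_smul_mem _ hWb.1) fun U hU => ?_
        show 0 ≤ ip U ((1/M) • W)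
        rw [ip_comm, ip_smul_left, ip_comm W]
        exact mul_nonneg (by positivity) (barr_ip_nonneg hcone hWb U hU)
      · show (∫ ω, |((1/M) • W : Ω →ₘ[μ] ℝ) ω| ∂μ) ≤ 1
        have h9 : (∫ ω, |((1/M) • W : Ω →ₘ[μ] ℝ) ω| ∂μ) = (1/M) * ∫ ω, |W ω| ∂μ := by
          rw [← integral_const_mul]
          refine integral_congr_ae ?_
          filter_upwards [AEEqFun.coeFn_smul (1/M) W] with ω h
          rw [h]
          simp only [Pi.smul_apply, smul_eq_mul, abs_mul]
          rw [abs_of_pos (by positivity : (0:ℝ) < 1/M)]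
        rw [h9]
        calc (1/M) * ∫ ω, |W ω| ∂μ ≤ (1/M) * M :=
              mul_le_mul_of_nonneg_left hWnorm (by positivity)
          _ = 1 := by field_simp
    have hsMW' : sM W' = ⟨W, hWb.1⟩ := by
      apply Subtype.ext
      show M • ((1/M) • W) = W
      rw [smul_smul, mul_one_div, div_self (ne_of_gt hMpos), one_smul]
    have hmem : (⟨W, hWb.1⟩ : ↥(kdual EE)) ∈ BM ∩ ⋂ p ∈ t, Zs p := by
      constructor
      · exact ⟨W', hW'K, hsMW'⟩
      · rw [Set.mem_iInter₂]
        intro p hp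
        exact hWle (some ⟨p, hp⟩)
    rw [ht] at hmem
    exact hmem
  obtain ⟨Winf, hWBM, hWall⟩ := hinter
  obtain ⟨W', hW'K, hW'eq⟩ := hWBM
  have hWbarr : (Winf : Ω →ₘ[μ] ℝ) ∈ barrS A (kdual EE) := by
    have hb := hW'K.1
    rw [← hW'eq]
    show M • (W' : Ω →ₘ[μ] ℝ) ∈ barrS A (kdual EE)
    refine mem_barr_of_nonneg (kdual_smul_mem _ hb.1) fun U hU => ?_
    rw [ip_comm, ip_smul_left, ip_comm]
    exact mul_nonneg (le_of_lt hMpos) (barr_ip_nonneg hcone hb U hU)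
  refine ⟨(Winf : Ω →ₘ[μ] ℝ), hWbarr, ?_⟩
  intro X hX
  have hXk : ∀ k : ℕ, ip (S X) (Winf : Ω →ₘ[μ] ℝ) ≤ pairing X Z + 1/((k:ℝ)+1) := by
    intro k
    exact Set.mem_iInter.1 hWall (⟨⟨X, hX⟩, k⟩ : P)
  refine le_of_forall_pos_le_add ?_
  intro ε hε
  obtain ⟨k, hk⟩ := exists_nat_one_div_lt hε
  exact le_trans (hXk k) (by linarith)

end Aux

/-- in the conic case, if `S(e)` is a strictly positive constant and the unit
ball slice of `bar(A)` in `L¹` is `σ(E',E)`-compact, then `σ_{S⁻¹(A)} = α`. -/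
theorem statement14 {μ : Measure Ω} [IsProbabilityMeasure μ] {d : ℕ}
    (Li : Fin d → Set (Ω →ₘ[μ] ℝ)) (nrmX : Fin d → ((Ω →ₘ[μ] ℝ) → ℝ))
    (EE : Set (Ω →ₘ[μ] ℝ)) (nrmE : (Ω →ₘ[μ] ℝ) → ℝ)
    (S : (Fin d → (Ω →ₘ[μ] ℝ)) → (Ω →ₘ[μ] ℝ)) (A : Set (Ω →ₘ[μ] ℝ))
    (hLi : ∀ i, IsAdmissible (Li i) (nrmX i))
    (hE : IsAdmissible EE nrmE)
    (hS : IsAdmissibleImpact (prodSet Li) (prodSet fun i => kdual (Li i)) EE (kdual EE) S)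
    (hA : IsAdmissibleAcceptance (prodSet Li) EE (kdual EE) S A)
    (hph : ∀ c : ℝ, 0 < c → ∀ X ∈ prodSet Li, S (c • X) = c • S X)
    (hcone : ∀ c : ℝ, 0 < c → ∀ U ∈ A, c • U ∈ A)
    -- `S(e)` is a strictly positive constant
    (hSe : ∃ c : ℝ, 0 < c ∧
        S (cvec μ fun _ => (1 : ℝ)) = (AEEqFun.const Ω c : Ω →ₘ[μ] ℝ))
    -- `bar(A) ∩ {W ∈ L¹ : ‖W‖₁ ≤ 1}` is `σ(E',E)`-compact
    (hcompact : @IsCompact (↥(kdual EE)) (wtop1 (kdual EE) EE)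
        {W : ↥(kdual EE) | (W : Ω →ₘ[μ] ℝ) ∈ barrS A (kdual EE) ∧
          (∫ ω, |(W : Ω →ₘ[μ] ℝ) ω| ∂μ) ≤ 1}) :
    ∀ Z ∈ prodSet fun i => kdual (Li i),
      suppV (sysAcc (prodSet Li) S A) Z = alpha (prodSet Li) (kdual EE) A S Z := by
  intro Z hZ
  have h0sys : (0 : Fin d → (Ω →ₘ[μ] ℝ)) ∈ sysAcc (prodSet Li) S A :=
    ⟨prodSet_zero_mem hLi, by rw [hS.normalized]; exact hA.zero_mem⟩
  have hsys_smul : ∀ c : ℝ, 0 < c → ∀ X ∈ sysAcc (prodSet Li) S A,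
      c • X ∈ sysAcc (prodSet Li) S A := by
    intro c hc X hX
    exact ⟨prodSet_smul_mem hLi c hX.1, by rw [hph c hc X hX.1]; exact hcone c hc _ hX.2⟩
  have hweak : ∀ X₀ ∈ sysAcc (prodSet Li) S A,
      alpha (prodSet Li) (kdual EE) A S Z ≤ ((pairing X₀ Z : ℝ) : EReal) := by
    intro X₀ hX₀
    simp only [alpha, penalty]
    refine iSup₂_le fun W hW => ?_
    rw [suppS_barr_eq_zero hA.zero_mem hcone hW, zero_add]
    refine le_trans (iInf₂_le X₀ hX₀.1) ?_
    have h1 : 0 ≤ ip (S X₀) W := barr_ip_nonneg hcone hW _ hX₀.2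
    have h2 : pairing X₀ Z - ip (S X₀) W ≤ pairing X₀ Z := by linarith
    show ((pairing X₀ Z - ip (S X₀) W : ℝ) : EReal) ≤ ((pairing X₀ Z : ℝ) : EReal)
    exact_mod_cast h2
  by_cases hneg : ∃ X₁ ∈ sysAcc (prodSet Li) S A, pairing X₁ Z < 0
  · obtain ⟨X₁, hX₁, hp1⟩ := hneg
    have hboth : ∀ r : ℝ, ∃ X ∈ sysAcc (prodSet Li) S A, pairing X Z ≤ r := by
      intro r
      obtain ⟨n, hn⟩ := exists_nat_ge (max 1 (r / pairing X₁ Z))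
      have hnpos : (0:ℝ) < n := lt_of_lt_of_le one_pos (le_trans (le_max_left _ _) hn)
      refine ⟨(n:ℝ) • X₁, hsys_smul n hnpos X₁ hX₁, ?_⟩
      rw [pairing_smul_left]
      have h2 : r / pairing X₁ Z ≤ n := le_trans (le_max_right _ _) hn
      calc (n:ℝ) * pairing X₁ Z ≤ (r / pairing X₁ Z) * pairing X₁ Z :=
            mul_le_mul_of_nonpos_right h2 (le_of_lt hp1)
        _ = r := div_mul_cancel₀ r (ne_of_lt hp1)
    have hsup : suppV (sysAcc (prodSet Li) S A) Z = ⊥ := by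
      apply ereal_eq_bot
      intro r
      obtain ⟨X, hX, hXr⟩ := hboth r
      simp only [suppV]
      refine le_trans (iInf₂_le X hX) ?_
      exact_mod_cast hXr
    have halpha : alpha (prodSet Li) (kdual EE) A S Z = ⊥ := by
      apply ereal_eq_bot
      intro r
      obtain ⟨X, hX, hXr⟩ := hboth r
      exact le_trans (hweak X hX) (by exact_mod_cast hXr)
    rw [hsup, halpha]
  · push_neg at hneg
    have hpos : ∀ X ∈ sysAcc (prodSet Li) S A, 0 ≤ pairing X Z := hneg
    have hsup : suppV (sysAcc (prodSet Li) S A) Z = 0 := by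
      refine le_antisymm ?_ ?_
      · simp only [suppV]
        refine le_trans (iInf₂_le 0 h0sys) ?_
        rw [pairing_zero_left]
        simp
      · simp only [suppV]
        refine le_iInf₂ fun X hX => ?_
        exact_mod_cast hpos X hX
    obtain ⟨W, hWb, hWle⟩ := exists_dual hLi hE hS hA hph hcone hSe hcompact hZ hpos
    have hge : (0 : EReal) ≤ alpha (prodSet Li) (kdual EE) A S Z := by
      simp only [alpha, penalty]
      refine le_trans ?_ (le_iSup₂ W hWb)
      rw [suppS_barr_eq_zero hA.zero_mem hcone hWb, zero_add]
      refine le_iInf₂ fun X hX => ?_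
      have h3 : 0 ≤ pairing X Z - ip (S X) W := by linarith [hWle X hX]
      show (0 : EReal) ≤ ((pairing X Z - ip (S X) W : ℝ) : EReal)
      exact_mod_cast h3
    have hle := hweak 0 h0sys
    rw [pairing_zero_left] at hle
    have hle' : alpha (prodSet Li) (kdual EE) A S Z ≤ 0 := by
      refine le_trans hle ?_
      simp
    rw [hsup]
    exact le_antisymm hge hle

end SystemicRisk
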